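/- Let L > 0 and let A = ∂ₓₓ - ∂ₓₓₓ with domain D(A) = {u ∈ H³(-L,L) : u(-L) = u(L) = uₓ(L) = 0}. Then the adjoint of A in L²(-L,L) is A* = ∂ₓₓ + ∂ₓₓₓ with domain D(A*) = {φ ∈ H³(-L,L) : φ(-L) = φ(L) = φₓ(-L) = 0}, and A* is dissipative: for every φ ∈ D(A*), (A*φ, φ)_{L²} ≤ 0. -/

import Mathlib

open intervalIntegral

private lemma ibp_aux (a b : ℝ) (f g : ℝ → ℝ) (hf : ContDiff ℝ 1 f) (hg : ContDiff ℝ 1 g) :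
    ∫ x in a..b, deriv f x * g x
      = f b * g b - f a * g a - ∫ x in a..b, f x * deriv g x := by
  have hfc : Continuous f := hf.continuous
  have hgc : Continuous g := hg.continuous
  have hfd : Continuous (deriv f) := hf.continuous_deriv le_rfl
  have hgd : Continuous (deriv g) := hg.continuous_deriv le_rfl
  have key := intervalIntegral.integral_deriv_mul_eq_sub
    (u := f) (v := g) (u' := deriv f) (v' := deriv g) (a := a) (b := b)
    (fun x _ => (hf.differentiable one_ne_zero x).hasDerivAt)
    (fun x _ => (hg.differentiable one_ne_zero x).hasDerivAt)
    (hfd.intervalIntegrable a b) (hgd.intervalIntegrable a b)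
  have hsplit : (∫ x in a..b, (deriv f x * g x + f x * deriv g x))
      = (∫ x in a..b, deriv f x * g x) + ∫ x in a..b, f x * deriv g x :=
    intervalIntegral.integral_add ((hfd.mul hgc).intervalIntegrable a b)
      ((hfc.mul hgd).intervalIntegrable a b)
  rw [hsplit] at key
  linarith

private lemma cd_step {n : ℕ} (f : ℝ → ℝ) (hf : ContDiff ℝ (n + 1) f) :
    ContDiff ℝ n (deriv f) :=
  (contDiff_succ_iff_deriv.mp hf).2.2

/-- the adjoint of `A = ∂ₓₓ - ∂ₓₓₓ` (domain `u(-L)=u(L)=uₓ(L)=0`)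
in `L²(-L,L)` is `A* = ∂ₓₓ + ∂ₓₓₓ` with domain `φ(-L)=φ(L)=φₓ(-L)=0`
(expressed via the duality identity `(Au, φ) = (u, A*φ)`), and `A*` is dissipative. -/
theorem kdvb_adjoint_dissipative (L : ℝ) (hL : 0 < L) :
    (∀ u φ : ℝ → ℝ, ContDiff ℝ 3 u → ContDiff ℝ 3 φ →
      u (-L) = 0 → u L = 0 → deriv u L = 0 →
      φ (-L) = 0 → φ L = 0 → deriv φ (-L) = 0 →
      (∫ x in (-L)..L, (iteratedDeriv 2 u x - iteratedDeriv 3 u x) * φ x) =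
        ∫ x in (-L)..L, u x * (iteratedDeriv 2 φ x + iteratedDeriv 3 φ x)) ∧
    (∀ φ : ℝ → ℝ, ContDiff ℝ 3 φ →
      φ (-L) = 0 → φ L = 0 → deriv φ (-L) = 0 →
      (∫ x in (-L)..L, (iteratedDeriv 2 φ x + iteratedDeriv 3 φ x) * φ x) ≤ 0) := by
  constructor
  · intro u φ hu hφ huL huR huD hφL hφR hφD
    -- derivatives
    have hu2 : ContDiff ℝ 2 (deriv u) := cd_step (n := 2) u hu
    have hu1 : ContDiff ℝ 1 (deriv (deriv u)) := cd_step (n := 1) (deriv u) hu2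
    have hφ2 : ContDiff ℝ 2 (deriv φ) := cd_step (n := 2) φ hφ
    have hφ1 : ContDiff ℝ 1 (deriv (deriv φ)) := cd_step (n := 1) (deriv φ) hφ2
    have hu3 : ContDiff ℝ 1 u := hu.of_le (by norm_num)
    have hφ3 : ContDiff ℝ 1 φ := hφ.of_le (by norm_num)
    have hu2' : ContDiff ℝ 1 (deriv u) := hu2.of_le (by norm_num)
    have hφ2' : ContDiff ℝ 1 (deriv φ) := hφ2.of_le (by norm_num)
    -- ∫ u' φ' = -∫ u φ''
    have e1 : (∫ x in (-L)..L, deriv u x * deriv φ x)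
        = - ∫ x in (-L)..L, u x * deriv (deriv φ) x := by
      have := ibp_aux (-L) L u (deriv φ) hu3 hφ2'
      rw [huL, huR] at this; linarith [this]
    -- ∫ u'' φ = ∫ u φ''
    have e2 : (∫ x in (-L)..L, deriv (deriv u) x * φ x)
        = ∫ x in (-L)..L, u x * deriv (deriv φ) x := by
      have := ibp_aux (-L) L (deriv u) φ hu2' hφ3
      rw [hφL, hφR] at this
      rw [this, e1]; ring
    -- ∫ u' φ'' = -∫ u φ'''
    have e3 : (∫ x in (-L)..L, deriv u x * deriv (deriv φ) x)
        = - ∫ x in (-L)..L, u x * deriv (deriv (deriv φ)) x := by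
      have := ibp_aux (-L) L u (deriv (deriv φ)) hu3 hφ1
      rw [huL, huR] at this; linarith [this]
    -- ∫ u'' φ' = -∫ u' φ'' (using u'(L)=0, φ'(-L)=0)
    have e4 : (∫ x in (-L)..L, deriv (deriv u) x * deriv φ x)
        = - ∫ x in (-L)..L, deriv u x * deriv (deriv φ) x := by
      have := ibp_aux (-L) L (deriv u) (deriv φ) hu2' hφ2'
      rw [huD, hφD] at this; linarith [this]
    -- ∫ u''' φ = -∫ u φ'''
    have e5 : (∫ x in (-L)..L, deriv (deriv (deriv u)) x * φ x)
        = - ∫ x in (-L)..L, u x * deriv (deriv (deriv φ)) x := by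
      have := ibp_aux (-L) L (deriv (deriv u)) φ hu1 hφ3
      rw [hφL, hφR] at this
      rw [this, e4, e3]; ring
    have hiter : ∀ f : ℝ → ℝ, iteratedDeriv 2 f = deriv (deriv f)
        ∧ iteratedDeriv 3 f = deriv (deriv (deriv f)) := by
      intro f
      constructor <;> simp [iteratedDeriv_succ, iteratedDeriv_one]
    have hsub : (∫ x in (-L)..L, (iteratedDeriv 2 u x - iteratedDeriv 3 u x) * φ x)
        = (∫ x in (-L)..L, deriv (deriv u) x * φ x)
          - ∫ x in (-L)..L, deriv (deriv (deriv u)) x * φ x := by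
      rw [(hiter u).1, (hiter u).2]
      have h1 : IntervalIntegrable (fun x => deriv (deriv u) x * φ x)
          MeasureTheory.volume (-L) L :=
        (hu1.continuous.mul hφ.continuous).intervalIntegrable _ _
      have h2 : IntervalIntegrable (fun x => deriv (deriv (deriv u)) x * φ x)
          MeasureTheory.volume (-L) L :=
        ((hu1.continuous_deriv le_rfl).mul hφ.continuous).intervalIntegrable _ _
      rw [← intervalIntegral.integral_sub h1 h2]
      congr 1; ext x; ring
    have hadd : (∫ x in (-L)..L, u x * (iteratedDeriv 2 φ x + iteratedDeriv 3 φ x))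
        = (∫ x in (-L)..L, u x * deriv (deriv φ) x)
          + ∫ x in (-L)..L, u x * deriv (deriv (deriv φ)) x := by
      rw [(hiter φ).1, (hiter φ).2]
      have h1 : IntervalIntegrable (fun x => u x * deriv (deriv φ) x)
          MeasureTheory.volume (-L) L :=
        (hu.continuous.mul hφ1.continuous).intervalIntegrable _ _
      have h2 : IntervalIntegrable (fun x => u x * deriv (deriv (deriv φ)) x)
          MeasureTheory.volume (-L) L :=
        (hu.continuous.mul (hφ1.continuous_deriv le_rfl)).intervalIntegrable _ _
      rw [← intervalIntegral.integral_add h1 h2]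
      congr 1; ext x; ring
    rw [hsub, hadd, e2, e5]; ring
  · intro φ hφ hφL hφR hφD
    have hφ2 : ContDiff ℝ 2 (deriv φ) := cd_step (n := 2) φ hφ
    have hφ1 : ContDiff ℝ 1 (deriv (deriv φ)) := cd_step (n := 1) (deriv φ) hφ2
    have hφ3 : ContDiff ℝ 1 φ := hφ.of_le (by norm_num)
    have hφ2' : ContDiff ℝ 1 (deriv φ) := hφ2.of_le (by norm_num)
    -- ∫ φ'' φ = -∫ (φ')²
    have e1 : (∫ x in (-L)..L, deriv (deriv φ) x * φ x)
        = - ∫ x in (-L)..L, deriv φ x * deriv φ x := by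
      have := ibp_aux (-L) L (deriv φ) φ hφ2' hφ3
      rw [hφL, hφR] at this
      linarith [this]
    -- ∫ φ'' φ' = φ'(L)^2 / 2
    have e2 : (∫ x in (-L)..L, deriv (deriv φ) x * deriv φ x)
        = deriv φ L ^ 2 / 2 := by
      have := ibp_aux (-L) L (deriv φ) (deriv φ) hφ2' hφ2'
      rw [hφD] at this
      have hc : (∫ x in (-L)..L, deriv φ x * deriv (deriv φ) x)
          = ∫ x in (-L)..L, deriv (deriv φ) x * deriv φ x := by
        congr 1; ext x; ring
      rw [hc] at this
      nlinarith [this]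
    -- ∫ φ''' φ = -∫ φ'' φ'
    have e3 : (∫ x in (-L)..L, deriv (deriv (deriv φ)) x * φ x)
        = - ∫ x in (-L)..L, deriv (deriv φ) x * deriv φ x := by
      have := ibp_aux (-L) L (deriv (deriv φ)) φ hφ1 hφ3
      rw [hφL, hφR] at this; linarith [this]
    have hiter : ∀ f : ℝ → ℝ, iteratedDeriv 2 f = deriv (deriv f)
        ∧ iteratedDeriv 3 f = deriv (deriv (deriv f)) := by
      intro f
      constructor <;> simp [iteratedDeriv_succ, iteratedDeriv_one]
    have hsplit : (∫ x in (-L)..L, (iteratedDeriv 2 φ x + iteratedDeriv 3 φ x) * φ x)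
        = (∫ x in (-L)..L, deriv (deriv φ) x * φ x)
          + ∫ x in (-L)..L, deriv (deriv (deriv φ)) x * φ x := by
      rw [(hiter φ).1, (hiter φ).2]
      have h1 : IntervalIntegrable (fun x => deriv (deriv φ) x * φ x)
          MeasureTheory.volume (-L) L :=
        (hφ1.continuous.mul hφ.continuous).intervalIntegrable _ _
      have h2 : IntervalIntegrable (fun x => deriv (deriv (deriv φ)) x * φ x)
          MeasureTheory.volume (-L) L :=
        ((hφ1.continuous_deriv le_rfl).mul hφ.continuous).intervalIntegrable _ _
      rw [← intervalIntegral.integral_add h1 h2]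
      congr 1; ext x; ring
    have hnn : (0:ℝ) ≤ ∫ x in (-L)..L, deriv φ x * deriv φ x := by
      apply intervalIntegral.integral_nonneg (by linarith : (-L) ≤ L)
      intro x _
      exact mul_self_nonneg _
    rw [hsplit, e1, e3, e2]
    nlinarith [sq_nonneg (deriv φ L)]
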